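/- arXiv:1410.0339 — 2 statements merged into one kernel-verified Lean document; each statement's English description precedes it below -/
import Mathlib

section
/- Let A be an n×n complex block shift with superdiagonal blocks A_1, …, A_{k-1}, and let M = max_{1 ≤ j ≤ k-1} ‖A_j‖. Then w(A) ≤ M·cos(π/(k+1)). -/
/-- The numerical radius `w(M)` of a square complex matrix, acting on Euclidean space:
`w(M) = sup {|⟨Mx, x⟩| : ‖x‖ = 1}` (here `inner x (M x)` is Mathlib's inner product, conjugate
linear in the first variable, so it equals the paper's `⟨Mx, x⟩`). -/
noncomputable def numRadius {ι : Type*} [Fintype ι] [DecidableEq ι] (M : Matrix ι ι ℂ) : ℝ :=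
  sSup {r : ℝ | ∃ x : EuclideanSpace ℂ ι, ‖x‖ = 1 ∧
    ‖(inner ℂ x (Matrix.toEuclideanLin M x) : ℂ)‖ = r}

/-- The operator norm `‖A‖ = max {‖Ax‖ : ‖x‖ = 1}` of a rectangular complex matrix. -/
noncomputable def opNorm {m n : Type*} [Fintype m] [Fintype n] [DecidableEq n]
    (A : Matrix m n ℂ) : ℝ :=
  sSup {r : ℝ | ∃ x : EuclideanSpace ℂ n, ‖x‖ = 1 ∧ ‖Matrix.toEuclideanLin A x‖ = r}

/-- The block shift with `k+1` diagonal blocks of sizes `n 0, …, n k` and the rectangular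
matrices `B j` (of size `n j × n (j+1)`) in the `(j, j+1)` block positions, zeros elsewhere. -/
noncomputable def blockShiftMatrix {k : ℕ} (n : Fin (k + 1) → ℕ)
    (B : ∀ j : Fin k, Matrix (Fin (n j.castSucc)) (Fin (n j.succ)) ℂ) :
    Matrix ((j : Fin (k + 1)) × Fin (n j)) ((j : Fin (k + 1)) × Fin (n j)) ℂ :=
  Matrix.of fun p q => ∑ j : Fin k,
    if h : p.1 = j.castSucc ∧ q.1 = j.succ
    then B j (Fin.cast (congrArg n h.1) p.2) (Fin.cast (congrArg n h.2) q.2)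
    else 0

open Finset in
/-- The key scalar (Fan–Hoffman / Fejér type) inequality:
`∑ t_j t_{j+1} ≤ cos (π/(k+2)) ∑ t_i²`. -/
lemma key_scalar_aux (k : ℕ) (T : ℕ → ℝ) :
    ∑ j ∈ range k, T j * T (j+1) ≤
      Real.cos (Real.pi / (k + 2)) * ∑ i ∈ range (k+1), T i ^ 2 := by
  set θ : ℝ := Real.pi / (k + 2) with hθ
  have hθpos : 0 < θ := by positivity
  set σ : ℕ → ℝ := fun m => Real.sin (m * θ) with hσ
  have hσpos : ∀ m : ℕ, 1 ≤ m → m ≤ k + 1 → 0 < σ m := by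
    intro m h1 h2
    apply Real.sin_pos_of_pos_of_lt_pi
    · positivity
    · have : (m : ℝ) < (k : ℝ) + 2 := by exact_mod_cast Nat.lt_succ_of_le h2
      calc (m:ℝ) * θ < ((k:ℝ)+2) * θ := by nlinarith
        _ = Real.pi := by rw [hθ]; field_simp
  have hσ0 : σ 0 = 0 := by simp [hσ]
  have hσtop : σ (k+2) = 0 := by
    have : ((k:ℝ)+2) * θ = Real.pi := by rw [hθ]; field_simp
    simp only [hσ]
    push_cast
    rw [this, Real.sin_pi]
  have hrec : ∀ m : ℕ, σ (m+2) + σ m = 2 * Real.cos θ * σ (m+1) := by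
    intro m
    have h1 : ((m:ℝ)+2) * θ = ((m:ℝ)+1) * θ + θ := by ring
    have h2 : (m:ℝ) * θ = ((m:ℝ)+1) * θ - θ := by ring
    simp only [hσ]
    push_cast
    rw [h1, h2, Real.sin_add, Real.sin_sub]
    ring
  set a : ℕ → ℝ := fun i => T i ^ 2 * σ (i+2) / (2 * σ (i+1)) with ha
  set b : ℕ → ℝ := fun i => T i ^ 2 * σ i / (2 * σ (i+1)) with hb
  have stepA : ∀ j ∈ range k, T j * T (j+1) ≤ a j + b (j+1) := by
    intro j hj
    rw [mem_range] at hj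
    have hc : 0 < σ (j+2) := hσpos _ (by omega) (by omega)
    have hd : 0 < σ (j+1) := hσpos _ (by omega) (by omega)
    simp only [ha, hb]
    rw [div_add_div _ _ (by positivity) (by positivity), le_div_iff₀ (by positivity)]
    nlinarith [sq_nonneg (T j * σ (j+2) - T (j+1) * σ (j+1)),
      sq_nonneg (T j * σ (j+1) - T (j+1) * σ (j+2)), mul_pos hc hd]
  have hab : ∀ i ∈ range (k+1), a i + b i = Real.cos θ * T i ^ 2 := by
    intro i hi
    rw [mem_range] at hi
    have hd : 0 < σ (i+1) := hσpos _ (by omega) (by omega)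
    simp only [ha, hb]
    rw [← add_div]
    rw [show T i ^ 2 * σ (i+2) + T i ^ 2 * σ i = T i ^ 2 * (σ (i+2) + σ i) by ring, hrec i]
    field_simp
  calc ∑ j ∈ range k, T j * T (j+1) ≤ ∑ j ∈ range k, (a j + b (j+1)) := sum_le_sum stepA
    _ = ∑ j ∈ range k, a j + ∑ j ∈ range k, b (j+1) := sum_add_distrib
    _ = ∑ i ∈ range (k+1), a i + ∑ i ∈ range (k+1), b i := by
        rw [sum_range_succ, sum_range_succ']
        have hak : a k = 0 := by simp [ha, hσtop]
        have hb0 : b 0 = 0 := by simp [hb, hσ0]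
        rw [hak, hb0]; ring
    _ = ∑ i ∈ range (k+1), (a i + b i) := sum_add_distrib.symm
    _ = ∑ i ∈ range (k+1), Real.cos θ * T i ^ 2 := sum_congr rfl hab
    _ = Real.cos θ * ∑ i ∈ range (k+1), T i ^ 2 := by rw [mul_sum]

lemma opNorm_nonneg_aux {m n : Type*} [Fintype m] [Fintype n] [DecidableEq n]
    (A : Matrix m n ℂ) : 0 ≤ opNorm A := by
  apply Real.sSup_nonneg
  rintro r ⟨x, hx, rfl⟩
  positivity

lemma norm_toEuclideanLin_le_aux {m n : Type*} [Fintype m] [Fintype n] [DecidableEq n]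
    (A : Matrix m n ℂ) (y : EuclideanSpace ℂ n) :
    ‖Matrix.toEuclideanLin A y‖ ≤ opNorm A * ‖y‖ := by
  set L := Matrix.toEuclideanLin A with hL
  set Lc := LinearMap.toContinuousLinearMap L with hLc
  have hcoe : ∀ z, Lc z = L z := fun z => rfl
  have hbdd : BddAbove {r : ℝ | ∃ x : EuclideanSpace ℂ n, ‖x‖ = 1 ∧ ‖L x‖ = r} := by
    refine ⟨‖Lc‖, ?_⟩
    rintro r ⟨x, hx, rfl⟩
    calc ‖L x‖ = ‖Lc x‖ := by rw [hcoe]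
      _ ≤ ‖Lc‖ * ‖x‖ := Lc.le_opNorm x
      _ = ‖Lc‖ := by rw [hx, mul_one]
  rcases eq_or_ne y 0 with rfl | hy
  · simp [opNorm]
  · have hyn : (0:ℝ) < ‖y‖ := norm_pos_iff.mpr hy
    have hmem : ‖L ((‖y‖⁻¹ : ℂ) • y)‖ ∈
        {r : ℝ | ∃ x : EuclideanSpace ℂ n, ‖x‖ = 1 ∧ ‖L x‖ = r} := by
      refine ⟨_, ?_, rfl⟩
      rw [norm_smul]
      simp [hyn.ne']
    have h := le_csSup hbdd hmem
    rw [map_smul, norm_smul] at h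
    simp only [norm_inv, Complex.norm_real] at h
    rw [norm_norm] at h
    have h2 := mul_le_mul_of_nonneg_left h hyn.le
    rw [opNorm, ← hL]
    calc ‖L y‖ = ‖y‖ * (‖y‖⁻¹ * ‖L y‖) := by field_simp
      _ ≤ ‖y‖ * sSup {r | ∃ x, ‖x‖ = 1 ∧ ‖L x‖ = r} := h2
      _ = _ * ‖y‖ := mul_comm _ _

open Finset in
lemma inner_blockShift_aux {k : ℕ} (n : Fin (k + 1) → ℕ)
    (B : ∀ j : Fin k, Matrix (Fin (n j.castSucc)) (Fin (n j.succ)) ℂ)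
    (x : EuclideanSpace ℂ ((j : Fin (k + 1)) × Fin (n j)))
    (blk : ∀ i : Fin (k+1), EuclideanSpace ℂ (Fin (n i)))
    (hblk : ∀ i a, blk i a = x ⟨i, a⟩) :
    (inner ℂ x (Matrix.toEuclideanLin (blockShiftMatrix n B) x) : ℂ) =
      ∑ j : Fin k, (inner ℂ (blk j.castSucc)
        (Matrix.toEuclideanLin (B j) (blk j.succ)) : ℂ) := by
  have expand : (inner ℂ x (Matrix.toEuclideanLin (blockShiftMatrix n B) x) : ℂ)
      = ∑ j : Fin k, ∑ p : ((i : Fin (k+1)) × Fin (n i)), ∑ q : ((i : Fin (k+1)) × Fin (n i)),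
          (starRingEnd ℂ) (x p) *
          ((if h : p.1 = j.castSucc ∧ q.1 = j.succ
            then B j (Fin.cast (congrArg n h.1) p.2) (Fin.cast (congrArg n h.2) q.2)
            else 0) * x q) := by
    rw [PiLp.inner_apply]
    simp only [RCLike.inner_apply', Matrix.toEuclideanLin_apply, PiLp.toLp_apply,
      Matrix.mulVec, dotProduct, blockShiftMatrix, Matrix.of_apply,
      Finset.mul_sum, Finset.sum_mul]
    exact (Finset.sum_congr rfl fun p _ => Finset.sum_comm).trans Finset.sum_comm
  rw [expand]
  refine Finset.sum_congr rfl fun j _ => ?_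
  rw [PiLp.inner_apply]
  simp only [RCLike.inner_apply', Matrix.toEuclideanLin_apply, PiLp.toLp_apply,
    Matrix.mulVec, dotProduct, hblk, Finset.mul_sum]
  rw [← Finset.univ_sigma_univ, Finset.sum_sigma]
  rw [Finset.sum_eq_single j.castSucc ?h1 (by simp)]
  · refine Finset.sum_congr rfl fun a _ => ?_
    rw [Finset.sum_sigma]
    refine (Finset.sum_eq_single j.succ ?h2 (by simp)).trans ?_
    · intro i _ hi
      apply Finset.sum_eq_zero
      intro b _
      rw [dif_neg (by simp [hi])]
      ring
    · refine Finset.sum_congr rfl fun b _ => ?_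
      rw [dif_pos ⟨rfl, rfl⟩]
      simp [Fin.cast]
  · intro i _ hi
    apply Finset.sum_eq_zero
    intro a _
    apply Finset.sum_eq_zero
    intro q _
    rw [dif_neg (by simp [hi])]
    ring

/-- For a block shift `A` with `k+1` blocks and `M = max_j ‖A_j‖`, one has
`w(A) ≤ M · cos (π / (k + 2))`. -/
theorem numRadius_blockShift_le_max_opNorm_mul_cos {k : ℕ} (hk : 0 < k) (n : Fin (k + 1) → ℕ)
    (B : ∀ j : Fin k, Matrix (Fin (n j.castSucc)) (Fin (n j.succ)) ℂ) (M : ℝ)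
    (hM : M = Finset.univ.sup'
      (Finset.univ_nonempty_iff.mpr (Fin.pos_iff_nonempty.mp hk)) fun j => opNorm (B j)) :
    numRadius (blockShiftMatrix n B) ≤ M * Real.cos (Real.pi / (k + 2)) := by
  have hcos : 0 ≤ Real.cos (Real.pi / (k + 2)) := by
    apply Real.cos_nonneg_of_mem_Icc
    constructor
    · have : (0:ℝ) ≤ Real.pi / (k + 2) := by positivity
      linarith [Real.pi_pos]
    · rw [div_le_div_iff₀ (by positivity) (by norm_num)]
      nlinarith [Real.pi_pos]
  have hM0 : 0 ≤ M := by
    rw [hM]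
    exact le_trans (opNorm_nonneg_aux _)
      (Finset.le_sup' (fun j => opNorm (B j)) (Finset.mem_univ (⟨0, hk⟩ : Fin k)))
  have hBM : ∀ j : Fin k, opNorm (B j) ≤ M := by
    intro j
    rw [hM]
    exact Finset.le_sup' (fun j => opNorm (B j)) (Finset.mem_univ j)
  apply Real.sSup_le _ (mul_nonneg hM0 hcos)
  rintro r ⟨x, hx, rfl⟩
  set blk : ∀ i : Fin (k+1), EuclideanSpace ℂ (Fin (n i)) := fun i => WithLp.toLp 2 (fun a => x ⟨i, a⟩) with hblkdef
  have hblk : ∀ i a, blk i a = x ⟨i, a⟩ := fun i a => rfl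
  set T : ℕ → ℝ := fun i => if h : i < k+1 then ‖blk ⟨i, h⟩‖ else 0 with hT
  have hTf : ∀ i : Fin (k+1), T i.val = ‖blk i‖ := by
    intro i
    simp only [hT, i.isLt, dif_pos, Fin.eta]
  have hT0 : ∀ i, 0 ≤ T i := by
    intro i
    simp only [hT]
    split <;> [positivity; rfl]
  have hsum1 : ∑ i ∈ Finset.range (k+1), T i ^ 2 = 1 := by
    have h1 : ‖x‖ ^ 2 = ∑ p : ((i : Fin (k+1)) × Fin (n i)), ‖x p‖ ^ 2 := by
      rw [EuclideanSpace.norm_eq, Real.sq_sqrt (by positivity)]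
    have h2 : ∀ i : Fin (k+1), ‖blk i‖ ^ 2 = ∑ a : Fin (n i), ‖blk i a‖ ^ 2 := by
      intro i
      rw [EuclideanSpace.norm_eq, Real.sq_sqrt (by positivity)]
    calc ∑ i ∈ Finset.range (k+1), T i ^ 2
        = ∑ i : Fin (k+1), T i.val ^ 2 := (Fin.sum_univ_eq_sum_range (fun i => T i ^ 2) (k+1)).symm
      _ = ∑ i : Fin (k+1), ‖blk i‖ ^ 2 := Finset.sum_congr rfl fun i _ => by rw [hTf]
      _ = ∑ i : Fin (k+1), ∑ a : Fin (n i), ‖x ⟨i, a⟩‖ ^ 2 := by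
          refine Finset.sum_congr rfl fun i _ => ?_
          rw [h2 i]
      _ = ∑ p : ((i : Fin (k+1)) × Fin (n i)), ‖x p‖ ^ 2 := by
          rw [← Finset.univ_sigma_univ, Finset.sum_sigma]
      _ = ‖x‖ ^ 2 := h1.symm
      _ = 1 := by rw [hx]; norm_num
  rw [inner_blockShift_aux n B x blk hblk]
  have step1 : ‖∑ j : Fin k,
      (inner ℂ (blk j.castSucc) (Matrix.toEuclideanLin (B j) (blk j.succ)) : ℂ)‖
      ≤ ∑ j : Fin k, M * (‖blk j.castSucc‖ * ‖blk j.succ‖) := by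
    calc ‖∑ j : Fin k,
          (inner ℂ (blk j.castSucc) (Matrix.toEuclideanLin (B j) (blk j.succ)) : ℂ)‖
        = ‖∑ j : Fin k,
          (inner ℂ (blk j.castSucc) (Matrix.toEuclideanLin (B j) (blk j.succ)) : ℂ)‖ :=
          rfl
      _ ≤ ∑ j : Fin k,
          ‖(inner ℂ (blk j.castSucc) (Matrix.toEuclideanLin (B j) (blk j.succ)) : ℂ)‖ :=
          norm_sum_le _ _
      _ ≤ ∑ j : Fin k, M * (‖blk j.castSucc‖ * ‖blk j.succ‖) := by
        refine Finset.sum_le_sum fun j _ => ?_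
        calc ‖(inner ℂ (blk j.castSucc) (Matrix.toEuclideanLin (B j) (blk j.succ)) : ℂ)‖
          ≤ ‖blk j.castSucc‖ * ‖Matrix.toEuclideanLin (B j) (blk j.succ)‖ :=
            norm_inner_le_norm _ _
        _ ≤ ‖blk j.castSucc‖ * (opNorm (B j) * ‖blk j.succ‖) := by
            apply mul_le_mul_of_nonneg_left (norm_toEuclideanLin_le_aux _ _) (norm_nonneg _)
        _ ≤ M * (‖blk j.castSucc‖ * ‖blk j.succ‖) := by
            rw [show ‖blk j.castSucc‖ * (opNorm (B j) * ‖blk j.succ‖)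
              = opNorm (B j) * (‖blk j.castSucc‖ * ‖blk j.succ‖) by ring]
            apply mul_le_mul_of_nonneg_right (hBM j)
            positivity
  have step2 : ∑ j : Fin k, M * (‖blk j.castSucc‖ * ‖blk j.succ‖)
      = M * ∑ j ∈ Finset.range k, T j * T (j+1) := by
    rw [← Finset.mul_sum]
    congr 1
    calc ∑ j : Fin k, ‖blk j.castSucc‖ * ‖blk j.succ‖
        = ∑ j : Fin k, T j.val * T (j.val + 1) := by
          refine Finset.sum_congr rfl fun j _ => ?_
          have e1 : T j.val = ‖blk j.castSucc‖ := by
            have := hTf j.castSucc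
            simpa using this
          have e2 : T (j.val + 1) = ‖blk j.succ‖ := by
            have := hTf j.succ
            simpa using this
          rw [e1, e2]
      _ = ∑ j ∈ Finset.range k, T j * T (j+1) :=
          Fin.sum_univ_eq_sum_range (fun j => T j * T (j+1)) k
  calc ‖∑ j : Fin k,
        (inner ℂ (blk j.castSucc) (Matrix.toEuclideanLin (B j) (blk j.succ)) : ℂ)‖
      ≤ ∑ j : Fin k, M * (‖blk j.castSucc‖ * ‖blk j.succ‖) := step1
    _ = M * ∑ j ∈ Finset.range k, T j * T (j+1) := step2
    _ ≤ M * (Real.cos (Real.pi / (k + 2)) * ∑ i ∈ Finset.range (k+1), T i ^ 2) :=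
        mul_le_mul_of_nonneg_left (key_scalar_aux k T) hM0
    _ = M * Real.cos (Real.pi / (k + 2)) := by rw [hsum1]; ring
end

section
/- Let A be an n×n complex block shift with superdiagonal blocks A_1, …, A_{k-1}, where A_j is an n_j×n_{j+1} complex matrix, and let A'' be the k×k matrix with (j, j+1) entry equal to m(A_j) (the minimum modulus of A_j) for 1 ≤ j ≤ k-1 and all other entries zero. Then w(A) ≥ w(A''). -/
/-- The minimum modulus `m(A) = min {‖Ax‖ : ‖x‖ = 1}` of a rectangular complex matrix. -/
noncomputable def minModulus {m n : Type*} [Fintype m] [Fintype n] [DecidableEq n]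
    (A : Matrix m n ℂ) : ℝ :=
  sInf {r : ℝ | ∃ x : EuclideanSpace ℂ n, ‖x‖ = 1 ∧ ‖Matrix.toEuclideanLin A x‖ = r}

/-- The `(k+1) × (k+1)` complex matrix with prescribed entries `c 0, …, c (k-1)` on the
superdiagonal and zeros elsewhere. -/
def superdiagMatrix {k : ℕ} (c : Fin k → ℂ) : Matrix (Fin (k + 1)) (Fin (k + 1)) ℂ :=
  Matrix.of fun i j => if h : (i : ℕ) < k ∧ (j : ℕ) = (i : ℕ) + 1 then c ⟨i, h.1⟩ else 0

lemma toEuclideanLin_coord {m n : Type*} [Fintype m] [Fintype n] [DecidableEq n] (M : Matrix m n ℂ)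
    (v : EuclideanSpace ℂ n) (i : m) :
    Matrix.toEuclideanLin M v i = ∑ j, M i j * v j := by
  simp [Matrix.toEuclideanLin_apply, Matrix.mulVec, dotProduct]

lemma inner_euclidean {n : Type*} [Fintype n] (x y : EuclideanSpace ℂ n) :
    (inner ℂ x y : ℂ) = ∑ i, (starRingEnd ℂ) (x i) * y i := by
  simp [PiLp.inner_apply, mul_comm]

lemma norm_sq_euclidean {n : Type*} [Fintype n] (x : EuclideanSpace ℂ n) :
    ‖x‖ ^ 2 = ∑ i, ‖x i‖ ^ 2 := by
  rw [EuclideanSpace.norm_eq, Real.sq_sqrt (by positivity)]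

lemma numRadius_bddAbove {ι : Type*} [Fintype ι] [DecidableEq ι] (M : Matrix ι ι ℂ) :
    BddAbove {r : ℝ | ∃ x : EuclideanSpace ℂ ι, ‖x‖ = 1 ∧
      ‖(inner ℂ x (Matrix.toEuclideanLin M x) : ℂ)‖ = r} := by
  refine ⟨‖(Matrix.toEuclideanLin M).toContinuousLinearMap‖, ?_⟩
  rintro r ⟨x, hx, rfl⟩
  calc ‖(inner ℂ x (Matrix.toEuclideanLin M x) : ℂ)‖
      ≤ ‖x‖ * ‖Matrix.toEuclideanLin M x‖ := by
        exact norm_inner_le_norm _ _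
    _ ≤ 1 * (‖(Matrix.toEuclideanLin M).toContinuousLinearMap‖ * ‖x‖) := by
        rw [hx]
        have := (Matrix.toEuclideanLin M).toContinuousLinearMap.le_opNorm x
        simp only [LinearMap.coe_toContinuousLinearMap'] at this
        rw [hx] at this
        linarith
    _ = ‖(Matrix.toEuclideanLin M).toContinuousLinearMap‖ := by rw [hx]; ring

lemma numRadius_nonneg {ι : Type*} [Fintype ι] [DecidableEq ι] (M : Matrix ι ι ℂ) :
    0 ≤ numRadius M := by
  apply Real.sSup_nonneg
  rintro r ⟨x, hx, rfl⟩
  exact norm_nonneg _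

lemma abs_inner_le_numRadius {ι : Type*} [Fintype ι] [DecidableEq ι] (M : Matrix ι ι ℂ)
    (x : EuclideanSpace ℂ ι) :
    ‖(inner ℂ x (Matrix.toEuclideanLin M x) : ℂ)‖ ≤ ‖x‖ ^ 2 * numRadius M := by
  rcases eq_or_ne x 0 with rfl | hx
  · simp
  · have hnx : (0:ℝ) < ‖x‖ := norm_pos_iff.mpr hx
    set z : EuclideanSpace ℂ ι := (‖x‖⁻¹ : ℂ) • x with hz
    have hzn : ‖z‖ = 1 := by
      rw [hz, norm_smul]
      simp [norm_inv, hnx.ne']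
    have hmem : ‖(inner ℂ z (Matrix.toEuclideanLin M z) : ℂ)‖ ∈
        {r : ℝ | ∃ x : EuclideanSpace ℂ ι, ‖x‖ = 1 ∧
          ‖(inner ℂ x (Matrix.toEuclideanLin M x) : ℂ)‖ = r} := ⟨z, hzn, rfl⟩
    have hle := le_csSup (numRadius_bddAbove M) hmem
    have hcalc : (inner ℂ x (Matrix.toEuclideanLin M x) : ℂ)
        = (‖x‖ ^ 2 : ℝ) * inner ℂ z (Matrix.toEuclideanLin M z) := by
      rw [hz, map_smul, inner_smul_left, inner_smul_right]
      have : (starRingEnd ℂ) ((‖x‖:ℂ)⁻¹) = (‖x‖:ℂ)⁻¹ := by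
        rw [map_inv₀, Complex.conj_ofReal]
      rw [this]
      have hne : (‖x‖:ℂ) ≠ 0 := by
        simpa using hnx.ne'
      field_simp
      push_cast
      ring
    rw [hcalc, norm_mul]
    simp only [norm_pow, Complex.norm_real, Real.norm_eq_abs, abs_norm, sq_abs, _root_.abs_pow]
    calc ‖x‖^2 * ‖(inner ℂ z (Matrix.toEuclideanLin M z) : ℂ)‖
        ≤ ‖x‖^2 * numRadius M := by
          exact mul_le_mul_of_nonneg_left hle (by positivity)
      _ = _ := rfl

lemma minModulus_nonneg {m n : Type*} [Fintype m] [Fintype n] [DecidableEq n]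
    (A : Matrix m n ℂ) : 0 ≤ minModulus A := by
  apply Real.sInf_nonneg
  rintro r ⟨x, hx, rfl⟩
  exact norm_nonneg _

lemma minModulus_le {m n : Type*} [Fintype m] [Fintype n] [DecidableEq n]
    (A : Matrix m n ℂ) (x : EuclideanSpace ℂ n) (hx : ‖x‖ = 1) :
    minModulus A ≤ ‖Matrix.toEuclideanLin A x‖ :=
  csInf_le ⟨0, by rintro r ⟨y, hy, rfl⟩; exact norm_nonneg _⟩ ⟨x, hx, rfl⟩

noncomputable def someUnit (m : ℕ) : EuclideanSpace ℂ (Fin m) :=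
  if h : m = 0 then 0 else EuclideanSpace.single ⟨0, Nat.pos_of_ne_zero h⟩ 1

lemma norm_someUnit (m : ℕ) (h : m ≠ 0) : ‖someUnit m‖ = 1 := by
  rw [someUnit, dif_neg h, EuclideanSpace.norm_single]; simp

lemma norm_someUnit_le (m : ℕ) : ‖someUnit m‖ ≤ 1 := by
  by_cases h : m = 0
  · rw [someUnit, dif_pos h]; simp
  · rw [norm_someUnit m h]

lemma norm_eq_zero_of_dim_zero {m : ℕ} (h : m = 0) (v : EuclideanSpace ℂ (Fin m)) :
    ‖v‖ = 0 := by
  subst h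
  rw [EuclideanSpace.norm_eq]
  simp

lemma minModulus_eq_zero {a b : ℕ} (A : Matrix (Fin a) (Fin b) ℂ) (h : a = 0 ∨ b = 0) :
    minModulus A = 0 := by
  rcases h with h | h
  · rcases Nat.eq_zero_or_pos b with hb | hb
    · subst hb
      rw [minModulus]
      convert Real.sInf_empty
      rw [Set.eq_empty_iff_forall_notMem]
      rintro r ⟨x, hx, rfl⟩
      rw [norm_eq_zero_of_dim_zero rfl x] at hx
      norm_num at hx
    · refine le_antisymm ?_ (minModulus_nonneg A)
      have := minModulus_le A (someUnit b) (norm_someUnit b (by omega))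
      rwa [norm_eq_zero_of_dim_zero h] at this
  · subst h
    rw [minModulus]
    convert Real.sInf_empty
    rw [Set.eq_empty_iff_forall_notMem]
    rintro r ⟨x, hx, rfl⟩
    rw [norm_eq_zero_of_dim_zero rfl x] at hx
    norm_num at hx
section Main
variable {k : ℕ} (n : Fin (k + 1) → ℕ)
    (B : ∀ j : Fin k, Matrix (Fin (n j.castSucc)) (Fin (n j.succ)) ℂ)

open scoped Classical in
noncomputable def uvec : ∀ j : Fin (k + 1), EuclideanSpace ℂ (Fin (n j)) :=
  Fin.reverseInduction (someUnit _) (fun j ujs =>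
    if _ : Matrix.toEuclideanLin (B j) ujs = 0 then someUnit _
    else (‖Matrix.toEuclideanLin (B j) ujs‖⁻¹ : ℂ) • Matrix.toEuclideanLin (B j) ujs)

open scoped Classical in
lemma uvec_castSucc (j : Fin k) :
    uvec n B j.castSucc =
      if _ : Matrix.toEuclideanLin (B j) (uvec n B j.succ) = 0 then someUnit _
      else (‖Matrix.toEuclideanLin (B j) (uvec n B j.succ)‖⁻¹ : ℂ) •
        Matrix.toEuclideanLin (B j) (uvec n B j.succ) :=
by
  unfold uvec
  rw [Fin.reverseInduction_castSucc]

lemma uvec_last : uvec n B (Fin.last k) = someUnit _ := by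
  unfold uvec
  rw [Fin.reverseInduction_last]

lemma norm_uvec_le (j : Fin (k + 1)) : ‖uvec n B j‖ ≤ 1 := by
  induction j using Fin.lastCases with
  | last =>
    rw [uvec_last]
    exact norm_someUnit_le _
  | cast j =>
    rw [uvec_castSucc]
    split
    · exact norm_someUnit_le _
    · rename_i h
      rw [norm_smul]
      simp [norm_inv, norm_ne_zero_iff.mpr h]

lemma norm_uvec (j : Fin (k + 1)) (h : n j ≠ 0) : ‖uvec n B j‖ = 1 := by
  induction j using Fin.lastCases with
  | last =>
    rw [uvec_last]
    exact norm_someUnit _ h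
  | cast j =>
    rw [uvec_castSucc]
    split
    · exact norm_someUnit _ h
    · rename_i hv
      rw [norm_smul]
      simp [norm_inv, norm_ne_zero_iff.mpr hv]

lemma inner_uvec (j : Fin k) :
    (inner ℂ (uvec n B j.castSucc) (Matrix.toEuclideanLin (B j) (uvec n B j.succ)) : ℂ)
      = (‖Matrix.toEuclideanLin (B j) (uvec n B j.succ)‖ : ℂ) := by
  rw [uvec_castSucc]
  split
  · rename_i h
    rw [h]
    simp
  · rename_i h
    rw [inner_smul_left, inner_self_eq_norm_sq_to_K]
    rw [map_inv₀, Complex.conj_ofReal]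
    have hne : ((‖Matrix.toEuclideanLin (B j) (uvec n B j.succ)‖ : ℂ)) ≠ 0 := by
      simpa using norm_ne_zero_iff.mpr h
    field_simp
    simp

end Main
lemma fin_cast_self {m : ℕ} (h : m = m) (a : Fin m) : Fin.cast h a = a :=
  Fin.ext (Fin.coe_cast h a)

lemma inner_superdiag {k : ℕ} (c : Fin k → ℂ) (y : EuclideanSpace ℂ (Fin (k + 1))) :
    (inner ℂ y (Matrix.toEuclideanLin (superdiagMatrix c) y) : ℂ)
      = ∑ j : Fin k, (starRingEnd ℂ) (y j.castSucc) * c j * y j.succ := by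
  rw [inner_euclidean]
  simp only [toEuclideanLin_coord, Finset.mul_sum]
  rw [Fin.sum_univ_castSucc]
  have hlast : ∀ l, (starRingEnd ℂ) (y (Fin.last k)) * (superdiagMatrix c (Fin.last k) l * y l)
      = 0 := by
    intro l
    rw [superdiagMatrix, Matrix.of_apply, dif_neg (by simp [Fin.val_last])]
    ring
  rw [Finset.sum_congr rfl (fun l _ => hlast l), Finset.sum_const_zero, add_zero]
  refine Finset.sum_congr rfl fun j _ => ?_
  rw [Finset.sum_eq_single j.succ]
  · rw [superdiagMatrix, Matrix.of_apply,
      dif_pos ⟨by simp [Fin.coe_castSucc], by simp [Fin.coe_castSucc, Fin.val_succ]⟩]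
    have : (⟨(j.castSucc : ℕ), by simpa using j.isLt⟩ : Fin k) = j := by
      apply Fin.ext; simp
    rw [this]
    ring
  · intro l _ hl
    have hcond : ¬ ((((j.castSucc : Fin (k+1)) : ℕ) < k) ∧ (l : ℕ) = ((j.castSucc : Fin (k+1)) : ℕ) + 1) := by
      rintro ⟨-, h2⟩
      exact hl (Fin.ext (by simpa [Fin.val_succ, Fin.coe_castSucc] using h2))
    rw [superdiagMatrix, Matrix.of_apply, dif_neg hcond]
    ring
  · intro h
    exact absurd (Finset.mem_univ _) h

lemma inner_blockShift {k : ℕ} (n : Fin (k + 1) → ℕ)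
    (B : ∀ j : Fin k, Matrix (Fin (n j.castSucc)) (Fin (n j.succ)) ℂ)
    (x : EuclideanSpace ℂ ((j : Fin (k + 1)) × Fin (n j))) :
    (inner ℂ x (Matrix.toEuclideanLin (blockShiftMatrix n B) x) : ℂ)
      = ∑ j : Fin k,
          (inner ℂ (show EuclideanSpace ℂ (Fin (n j.castSucc)) from WithLp.toLp 2 fun a => x ⟨j.castSucc, a⟩)
            (Matrix.toEuclideanLin (B j)
              (show EuclideanSpace ℂ (Fin (n j.succ)) from WithLp.toLp 2 fun b => x ⟨j.succ, b⟩)) : ℂ) := by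
  rw [inner_euclidean]
  simp only [toEuclideanLin_coord, blockShiftMatrix, Matrix.of_apply, Finset.sum_mul,
    Finset.mul_sum]
  rw [Finset.sum_comm]
  rw [Finset.sum_congr rfl fun q _ => Finset.sum_comm]
  rw [Finset.sum_comm]
  refine Finset.sum_congr rfl fun j _ => ?_
  rw [inner_euclidean]
  simp only [toEuclideanLin_coord, Finset.mul_sum, PiLp.toLp_apply]
  rw [← Finset.univ_sigma_univ, Finset.sum_sigma]
  rw [Finset.sum_eq_single j.succ]
  · conv_rhs => rw [Finset.sum_comm]
    refine Finset.sum_congr rfl fun b _ => ?_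
    rw [Finset.sum_sigma]
    rw [Finset.sum_eq_single j.castSucc]
    · refine Finset.sum_congr rfl fun a _ => ?_
      rw [dif_pos ⟨rfl, rfl⟩, fin_cast_self, fin_cast_self]
    · intro i _ hi
      apply Finset.sum_eq_zero
      intro a _
      rw [dif_neg (by rintro ⟨h1, -⟩; exact hi h1)]
      ring
    · intro h; exact absurd (Finset.mem_univ _) h
  · intro l _ hl
    apply Finset.sum_eq_zero
    intro p _
    apply Finset.sum_eq_zero
    intro b _
    rw [dif_neg (by rintro ⟨-, h2⟩; exact hl h2)]
    ring
  · intro h; exact absurd (Finset.mem_univ _) h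

/-- For a block shift `A` with superdiagonal blocks `A_j`, the numerical
radius of `A` is at least that of the scalar shift with superdiagonal entries `m(A_j)`. -/
theorem numRadius_superdiag_minModulus_le_numRadius_blockShift {k : ℕ} (n : Fin (k + 1) → ℕ)
    (B : ∀ j : Fin k, Matrix (Fin (n j.castSucc)) (Fin (n j.succ)) ℂ) :
    numRadius (superdiagMatrix fun j => (minModulus (B j) : ℂ))
      ≤ numRadius (blockShiftMatrix n B) := by
  apply Real.sSup_le _ (numRadius_nonneg _)
  rintro r ⟨y, hy, rfl⟩
  rw [inner_superdiag]
  classical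
  set z : Fin (k + 1) → ℝ := fun i => if n i = 0 then 0 else ‖y i‖ with hz
  set t : Fin k → ℝ := fun j => ‖Matrix.toEuclideanLin (B j) (uvec n B j.succ)‖ with ht
  have hz0 : ∀ i, 0 ≤ z i := fun i => by
    rw [hz]; dsimp only; split
    · exact le_refl 0
    · exact norm_nonneg _
  have hzy : ∀ i, z i ≤ ‖y i‖ := fun i => by
    rw [hz]; dsimp only; split
    · exact norm_nonneg _
    · exact le_refl _
  have ht0 : ∀ j, 0 ≤ t j := fun j => norm_nonneg _
  have hm0 : ∀ j : Fin k, 0 ≤ minModulus (B j) := fun j => minModulus_nonneg _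
  have step1 : ‖(∑ j : Fin k,
        (starRingEnd ℂ) (y j.castSucc) * ((minModulus (B j) : ℝ) : ℂ) * y j.succ)‖
      ≤ ∑ j : Fin k, minModulus (B j) * (z j.castSucc * z j.succ) := by
    refine (norm_sum_le _ _).trans ?_
    refine Finset.sum_le_sum fun j _ => ?_
    rw [norm_mul, norm_mul, Complex.norm_conj, Complex.norm_real, Real.norm_eq_abs, abs_of_nonneg (hm0 j)]
    by_cases h1 : n j.castSucc = 0
    · rw [minModulus_eq_zero _ (Or.inl h1)]; simp
    · by_cases h2 : n j.succ = 0
      · rw [minModulus_eq_zero _ (Or.inr h2)]; simp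
      · rw [hz]; dsimp only; rw [if_neg h1, if_neg h2]
        exact le_of_eq (by ring)
  have step2 : ∑ j : Fin k, minModulus (B j) * (z j.castSucc * z j.succ)
      ≤ ∑ j : Fin k, t j * (z j.castSucc * z j.succ) := by
    refine Finset.sum_le_sum fun j _ => ?_
    by_cases h2 : z j.succ = 0
    · rw [h2]; simp
    · have hn2 : n j.succ ≠ 0 := by
        intro h
        rw [hz] at h2; dsimp only at h2; rw [if_pos h] at h2; exact h2 rfl
      have hmt : minModulus (B j) ≤ t j := by
        rw [ht]; exact minModulus_le _ _ (norm_uvec n B _ hn2)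
      exact mul_le_mul_of_nonneg_right hmt (mul_nonneg (hz0 _) (hz0 _))
  set x : EuclideanSpace ℂ ((j : Fin (k + 1)) × Fin (n j)) :=
    WithLp.toLp 2 fun p => (z p.1 : ℂ) * uvec n B p.1 p.2 with hx
  have hblock : ∀ i : Fin (k + 1),
      (WithLp.toLp 2 fun a => x ⟨i, a⟩) = ((z i : ℂ) • uvec n B i : EuclideanSpace ℂ (Fin (n i))) := by
    intro i; ext a
    rw [hx]; dsimp only
    simp [PiLp.smul_apply, smul_eq_mul]
  have hinner : (inner ℂ x (Matrix.toEuclideanLin (blockShiftMatrix n B) x) : ℂ)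
      = ((∑ j : Fin k, t j * (z j.castSucc * z j.succ) : ℝ) : ℂ) := by
    rw [inner_blockShift]
    push_cast
    refine Finset.sum_congr rfl fun j _ => ?_
    rw [hblock, hblock, map_smul, inner_smul_left, inner_smul_right, Complex.conj_ofReal,
      inner_uvec, ht]
    push_cast
    ring
  have habs : ‖(inner ℂ x (Matrix.toEuclideanLin (blockShiftMatrix n B) x) : ℂ)‖
      = ∑ j : Fin k, t j * (z j.castSucc * z j.succ) := by
    rw [hinner, Complex.norm_real, Real.norm_eq_abs, abs_of_nonneg]
    exact Finset.sum_nonneg fun j _ => mul_nonneg (ht0 j) (mul_nonneg (hz0 _) (hz0 _))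
  have hxle : ‖x‖ ^ 2 ≤ 1 := by
    rw [norm_sq_euclidean, ← Finset.univ_sigma_univ, Finset.sum_sigma]
    have hterm : ∀ i : Fin (k + 1),
        ∑ a : Fin (n i), ‖x ⟨i, a⟩‖ ^ 2 ≤ ‖y i‖ ^ 2 := by
      intro i
      have heq : ∑ a : Fin (n i), ‖x ⟨i, a⟩‖ ^ 2
          = z i ^ 2 * ‖uvec n B i‖ ^ 2 := by
        rw [norm_sq_euclidean, Finset.mul_sum]
        refine Finset.sum_congr rfl fun a _ => ?_
        rw [hx]; dsimp only
        rw [norm_mul, Complex.norm_real, Real.norm_eq_abs, mul_pow, sq_abs]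
      rw [heq]
      have h1 := norm_uvec_le n B i
      have h2 := norm_nonneg (uvec n B i)
      have h3 := hzy i
      have h4 := hz0 i
      calc z i ^ 2 * ‖uvec n B i‖ ^ 2 ≤ z i ^ 2 * 1 :=
            mul_le_mul_of_nonneg_left (by nlinarith) (sq_nonneg _)
        _ = z i ^ 2 := mul_one _
        _ ≤ ‖y i‖ ^ 2 := pow_le_pow_left₀ h4 h3 2
    calc ∑ i : Fin (k + 1), ∑ a : Fin (n i), ‖x ⟨i, a⟩‖ ^ 2
        ≤ ∑ i : Fin (k + 1), ‖y i‖ ^ 2 :=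
          Finset.sum_le_sum fun i _ => hterm i
      _ = 1 := by rw [← norm_sq_euclidean, hy]; norm_num
  refine le_trans (step1.trans step2) ?_
  rw [← habs]
  refine (abs_inner_le_numRadius (blockShiftMatrix n B) x).trans ?_
  calc ‖x‖ ^ 2 * numRadius (blockShiftMatrix n B)
      ≤ 1 * numRadius (blockShiftMatrix n B) :=
        mul_le_mul_of_nonneg_right hxle (numRadius_nonneg _)
    _ = numRadius (blockShiftMatrix n B) := one_mul _
end
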